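/- If G is a nontrivial finite nilpotent group with the Magnus Property and p is a prime dividing the order of G, then p ∈ {2, 3}. -/

import Mathlib

/-- A group has the Magnus Property if any two elements with the same normal
closure are conjugate or inverse-conjugate. -/
def MagnusProperty (G : Type*) [Group G] : Prop :=
  ∀ x y : G, Subgroup.normalClosure {x} = Subgroup.normalClosure {y} →
    IsConj x y ∨ IsConj x y⁻¹

/-- Every prime dividing the order of a finite nilpotent group is the order of
some central element. -/
lemma exists_central_orderOf_eq {G : Type*} [Group G] [Finite G]
    (hnilp : Group.IsNilpotent G) (p : ℕ) (hp : p.Prime) (hdvd : p ∣ Nat.card G) :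
    ∃ x : G, x ∈ Subgroup.center G ∧ orderOf x = p := by
  classical
  haveI : Fact p.Prime := ⟨hp⟩
  obtain ⟨e⟩ := ((isNilpotent_of_finite_tfae (G := G)).out 0 4).mp hnilp
  have hcard : Nat.card G ≠ 0 := Nat.card_pos.ne'
  -- a central element of prime order in every Sylow subgroup
  have key : ∀ (q : (Nat.card G).primeFactors) (Q : Sylow q G),
      ∃ z : (Q : Subgroup G), z ∈ Subgroup.center (Q : Subgroup G) ∧ orderOf z = (q : ℕ) := by
    intro q Q
    haveI : Fact (Nat.Prime (q : ℕ)) := ⟨Nat.prime_of_mem_primeFactors q.2⟩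
    have hqG : (q : ℕ) ∣ Nat.card G := Nat.dvd_of_mem_primeFactors q.2
    have hmul : Nat.card (Q : Subgroup G) * (Q : Subgroup G).index = Nat.card G :=
      Subgroup.card_mul_index _
    have hqQ : (q : ℕ) ∣ Nat.card (Q : Subgroup G) := by
      have h' : (q : ℕ) ∣ Nat.card (Q : Subgroup G) * (Q : Subgroup G).index := by
        rw [hmul]; exact hqG
      rcases (Nat.Prime.dvd_mul Fact.out).mp h' with h | h
      · exact h
      · exact absurd h (Sylow.not_dvd_index' Q Nat.card_pos.ne')
    haveI : Nontrivial (Q : Subgroup G) := by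
      rw [← Finite.one_lt_card_iff_nontrivial]
      by_contra hlt
      push_neg at hlt
      have h1 : Nat.card (Q : Subgroup G) = 1 := le_antisymm hlt Nat.card_pos
      rw [h1, Nat.dvd_one] at hqQ
      exact (Fact.out : Nat.Prime (q : ℕ)).one_lt.ne' hqQ
    haveI : Nontrivial (Subgroup.center (Q : Subgroup G)) :=
      (Q.isPGroup').center_nontrivial
    have hpc : IsPGroup (q : ℕ) (Subgroup.center (Q : Subgroup G)) :=
      (Q.isPGroup').to_subgroup _
    have hdvdc : (q : ℕ) ∣ Nat.card (Subgroup.center (Q : Subgroup G)) := by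
      obtain ⟨n, hn⟩ := (IsPGroup.iff_card).mp hpc
      rcases n with _ | n
      · simp only [pow_zero] at hn
        exact absurd hn (Finite.one_lt_card_iff_nontrivial.mpr ‹_›).ne'
      · exact hn ▸ dvd_pow_self _ (Nat.succ_ne_zero n)
    obtain ⟨z, hz⟩ := exists_prime_orderOf_dvd_card' (q : ℕ) hdvdc
    exact ⟨((Subgroup.center (Q : Subgroup G)).subtype z), z.2,
      (orderOf_injective _ (Subgroup.subtype_injective _) z).trans hz⟩
  set i : (Nat.card G).primeFactors := ⟨p, Nat.mem_primeFactors.mpr ⟨hp, hdvd, hcard⟩⟩ with hi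
  choose g hg1 hg2 using key i
  set f : ∀ q : (Nat.card G).primeFactors, ∀ Q : Sylow q G, ↥(Q : Subgroup G) :=
    Pi.mulSingle i g with hf
  have hfi : f i = g := by rw [hf]; exact Pi.mulSingle_eq_same (M := fun q : (Nat.card G).primeFactors => ∀ Q : Sylow (q : ℕ) G, ↥(Q : Subgroup G)) i g
  obtain ⟨Q₀⟩ : Nonempty (Sylow (i : ℕ) G) := inferInstance
  have hgQ0 : orderOf (g Q₀) = p := hg2 Q₀
  refine ⟨e f, ?_, ?_⟩
  · rw [Subgroup.mem_center_iff]
    intro y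
    obtain ⟨h, rfl⟩ := e.surjective y
    rw [← map_mul, ← map_mul]
    congr 1
    funext q Q
    show h q Q * f q Q = f q Q * h q Q
    rcases eq_or_ne q i with rfl | hq
    · rw [hfi]
      exact Subgroup.mem_center_iff.mp (hg1 Q) (h i Q)
    · rw [hf, Pi.mulSingle_eq_of_ne hq]
      simp
  · have hne : e f ≠ 1 := by
      intro hcon
      have : f = 1 := e.injective (by simpa using hcon)
      have hz : g Q₀ = 1 := by
        have := congrFun (congrFun this i) Q₀
        rwa [hfi] at this
      rw [hz, orderOf_one] at hgQ0
      exact hp.one_lt.ne' hgQ0.symm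
    have hpow : (e f) ^ p = 1 := by
      rw [← map_pow]
      have : f ^ p = 1 := by
        funext q Q
        show (f q Q) ^ p = 1
        rcases eq_or_ne q i with rfl | hq
        · rw [hfi]
          have horder : orderOf (g Q) = p := hg2 Q
          rw [← horder]
          exact pow_orderOf_eq_one (g Q)
        · rw [hf, Pi.mulSingle_eq_of_ne hq]
          simp
      rw [this, map_one]
    exact orderOf_eq_prime hpow hne

theorem finite_nilpotent_MP_prime_divisors (G : Type*) [Group G] [Finite G] [Nontrivial G]
    (hnilp : Group.IsNilpotent G)
    (hG : MagnusProperty G) (p : ℕ) (hp : p.Prime) (hdvd : p ∣ Nat.card G) :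
    p ∈ ({2, 3} : Set ℕ) := by
  obtain ⟨x, hxc, hxo⟩ := exists_central_orderOf_eq hnilp p hp hdvd
  by_cases h2 : p = 2
  · exact Set.mem_insert_iff.mpr (Or.inl h2)
  -- p is odd
  obtain ⟨m, hm⟩ := hp.odd_of_ne_two h2
  have hzp : Subgroup.zpowers x = Subgroup.zpowers (x ^ 2) := by
    apply le_antisymm
    · rw [Subgroup.zpowers_le]
      have hxp : x ^ p = 1 := by rw [← hxo]; exact pow_orderOf_eq_one x
      have hkey : (x ^ 2) ^ (m + 1) = x := by
        rw [← pow_mul]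
        have h1 : 2 * (m + 1) = p + 1 := by omega
        rw [h1, pow_succ, hxp, one_mul]
      refine Subgroup.mem_zpowers_iff.mpr ⟨((m + 1 : ℕ) : ℤ), ?_⟩
      rw [zpow_natCast]
      exact hkey
    · rw [Subgroup.zpowers_le]
      exact Subgroup.npow_mem_zpowers x 2
  have hle : Subgroup.zpowers x ≤ Subgroup.center G :=
    Subgroup.zpowers_le.mpr hxc
  have hN : (Subgroup.zpowers x).Normal := by
    constructor
    intro n hn c
    have hcn := Subgroup.mem_center_iff.mp (hle hn) c
    rw [hcn, mul_inv_cancel_right]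
    exact hn
  have hN2 : (Subgroup.zpowers (x ^ 2)).Normal := hzp ▸ hN
  have hc1 : Subgroup.normalClosure {x} = Subgroup.zpowers x :=
    le_antisymm
      (Subgroup.normalClosure_le_normal (Set.singleton_subset_iff.mpr (Subgroup.mem_zpowers x)))
      (Subgroup.zpowers_le.mpr (Subgroup.subset_normalClosure rfl))
  have hc2 : Subgroup.normalClosure {x ^ 2} = Subgroup.zpowers (x ^ 2) :=
    le_antisymm
      (Subgroup.normalClosure_le_normal
        (Set.singleton_subset_iff.mpr (Subgroup.mem_zpowers _)))
      (Subgroup.zpowers_le.mpr (Subgroup.subset_normalClosure rfl))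
  have hMP := hG x (x ^ 2) (by rw [hc1, hc2, hzp])
  have hx1 : x ≠ 1 := by
    intro h
    rw [h, orderOf_one] at hxo
    exact hp.one_lt.ne' hxo.symm
  rcases hMP with h | h
  · exfalso
    obtain ⟨c, hc⟩ := isConj_iff.mp h
    have : c * x * c⁻¹ = x := by
      rw [Subgroup.mem_center_iff.mp hxc c, mul_inv_cancel_right]
    rw [this] at hc
    have : x * x = x * 1 := by rw [mul_one, ← sq, ← hc]
    exact hx1 (mul_left_cancel this)
  · obtain ⟨c, hc⟩ := isConj_iff.mp h
    have hcc : c * x * c⁻¹ = x := by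
      rw [Subgroup.mem_center_iff.mp hxc c, mul_inv_cancel_right]
    rw [hcc] at hc
    have h3 : x ^ 3 = 1 := by
      have h31 : x ^ 3 = x * x ^ 2 := by
        rw [pow_succ']
      rw [h31]
      nth_rewrite 1 [hc]
      rw [inv_mul_cancel]
    have : p ∣ 3 := hxo ▸ orderOf_dvd_of_pow_eq_one h3
    have : p = 3 := (Nat.prime_dvd_prime_iff_eq hp Nat.prime_three).mp this
    simp [this]
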